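/- Let X and Y be persistence modules over a field K, each with N intervals, such that within each of X and Y all critical values (births and deaths) are pairwise distinct and any two of them differ by more than 2ε. Let α : X → Y and β : Y → X form an ε-interleaving, and let B_X = {x_1,…,x_N} and B_Y^{old} = {y_1,…,y_N} be bases such that |birth(x_i) − birth(y_i)| < ε and |death(x_i) − death(y_i)| < ε for all i. Then Mat_{B_X}^{B_Y^{old}}(α) is a basis transformation matrix for Y with respect to B_Y^{old}, and for the transformed basis B_Y^{new} = Mat_{B_X}^{B_Y^{old}}(α)(B_Y^{old}), both Mat_{B_X}^{B_Y^{new}}(α) and Mat_{B_Y^{new}}^{B_X}(β) are the identity matrix. -/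

import Mathlib

open scoped BigOperators

universe u v

/-- A persistence module over a field `K`. -/
structure PersistenceModule (K : Type u) [Field K] where
  space : ℝ → Type v
  [instAdd : ∀ t, AddCommGroup (space t)]
  [instMod : ∀ t, Module K (space t)]
  trans : ∀ s t : ℝ, s ≤ t → (space s →ₗ[K] space t)
  trans_self : ∀ (t : ℝ) (h : t ≤ t), trans t t h = LinearMap.id
  trans_trans : ∀ (r s t : ℝ) (hrs : r ≤ s) (hst : s ≤ t) (x : space r),
      trans s t hst (trans r s hrs x) = trans r t (hrs.trans hst) x

attribute [instance] PersistenceModule.instAdd PersistenceModule.instMod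

namespace PersistenceModule

variable {K : Type u} [Field K]

/-- `x ∈ X_t` is born at `t` if it is not in the image of any earlier transition map. -/
def BornAt (X : PersistenceModule K) (t : ℝ) (x : X.space t) : Prop :=
  ∀ (s : ℝ) (h : s < t), x ∉ Set.range (X.trans s t h.le)

/-- The death time of an element `x ∈ X_t`. -/
noncomputable def death (X : PersistenceModule K) (t : ℝ) (x : X.space t) : ℝ :=
  sInf {s : ℝ | ∃ h : t < s, X.trans t s h.le x = 0}

/-- `x` is a basis of `X` realizing the intervals `[b i, d i)`. -/
def IsBasisFamily {ι : Type*} (X : PersistenceModule K) (b d : ι → ℝ)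
    (x : ∀ i, X.space (b i)) : Prop :=
  (∀ i, X.BornAt (b i) (x i)) ∧
  (∀ i, X.death (b i) (x i) = d i) ∧
  (∀ t : ℝ,
    LinearIndependent K
      (fun i : {i : ι // b i ≤ t ∧ t < d i} => X.trans (b i.1) t i.2.1 (x i.1)) ∧
    Submodule.span K (Set.range
      (fun i : {i : ι // b i ≤ t ∧ t < d i} => X.trans (b i.1) t i.2.1 (x i.1))) = ⊤)

open scoped Classical in
/-- The image of the basis element `x j` at height `h` (or `0` if not yet born). -/
noncomputable def pushTo {ι : Type*} (X : PersistenceModule K) (b : ι → ℝ)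
    (x : ∀ i, X.space (b i)) (h : ℝ) (j : ι) : X.space h :=
  if hb : b j ≤ h then X.trans (b j) h hb (x j) else 0

end PersistenceModule

/-- An `ε`-morphism of persistence modules. -/
structure EpsMorphism {K : Type u} [Field K] (X Y : PersistenceModule K) (ε : ℝ) where
  maps : ∀ r r' : ℝ, r + ε = r' → (X.space r →ₗ[K] Y.space r')
  comm : ∀ (s t s' t' : ℝ) (hs : s + ε = s') (ht : t + ε = t') (hst : s ≤ t)
      (x : X.space s),
    maps t t' ht (X.trans s t hst x) = Y.trans s' t' (by linarith) (maps s s' hs x)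

/-- A pair of `ε`-morphisms forming an `ε`-interleaving. -/
def IsInterleaving {K : Type u} [Field K] (X Y : PersistenceModule K) (ε : ℝ)
    (F : EpsMorphism X Y ε) (G : EpsMorphism Y X ε) : Prop :=
  (∀ (r r'' : ℝ) (h : r + ε + ε = r'') (hr : r ≤ r'') (x : X.space r),
      G.maps (r + ε) r'' (by linarith) (F.maps r (r + ε) rfl x) = X.trans r r'' hr x) ∧
  (∀ (r r'' : ℝ) (h : r + ε + ε = r'') (hr : r ≤ r'') (y : Y.space r),
      F.maps (r + ε) r'' (by linarith) (G.maps r (r + ε) rfl y) = Y.trans r r'' hr y)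

/-- `A` is the matrix of the `ε`-morphism `α` with respect to the bases `x` of `X`
(realizing `[bX i, dX i)`) and `y` of `Y` (realizing `[bY j, dY j)`). -/
def IsMatrixOf {K : Type u} [Field K] {X Y : PersistenceModule K} {ε : ℝ}
    {N M : ℕ} (α : EpsMorphism X Y ε)
    (bX dX : Fin N → ℝ) (x : ∀ i, X.space (bX i))
    (bY dY : Fin M → ℝ) (y : ∀ j, Y.space (bY j))
    (A : Matrix (Fin M) (Fin N) K) : Prop :=
  (∀ i, α.maps (bX i) (bX i + ε) rfl (x i)
      = ∑ j, A j i • Y.pushTo bY y (bX i + ε) j) ∧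
  (∀ (j : Fin M) (i : Fin N), ¬ (bY j ≤ bX i + ε ∧ bX i + ε < dY j) → A j i = 0)

/-- A basis transformation matrix. -/
def IsBasisTransformMatrix {K : Type u} [Field K] {N : ℕ} (b d : Fin N → ℝ)
    (A : Matrix (Fin N) (Fin N) K) : Prop :=
  (∀ i, A i i ≠ 0) ∧ ∀ j i, A j i ≠ 0 → b j ≤ b i ∧ d j ≤ d i

/-- The transformed family `A(B)`: `x_i^new = ∑ j A j i • φ(x_j)`. -/
noncomputable def transformBasis {K : Type u} [Field K] {N : ℕ} (X : PersistenceModule K)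
    (b : Fin N → ℝ) (x : ∀ i, X.space (b i)) (A : Matrix (Fin N) (Fin N) K)
    (i : Fin N) : X.space (b i) :=
  ∑ j, A j i • X.pushTo b x (b i) j

/-- The elementary matrix `e_{lk}^μ`: identity with extra entry `μ` in position `(k, l)`. -/
def eMat {K : Type u} [Field K] {N : ℕ} (l k : Fin N) (μ : K) : Matrix (Fin N) (Fin N) K :=
  1 + Matrix.single k l μ

namespace PersistenceModule

variable {K : Type u} [Field K] {N : ℕ} {X : PersistenceModule K}
  {b d : Fin N → ℝ} {x : ∀ i, X.space (b i)}

lemma pushTo_of_le {t : ℝ} {j : Fin N} (h : b j ≤ t) :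
    X.pushTo b x t j = X.trans (b j) t h (x j) := dif_pos h

lemma pushTo_of_not_le {t : ℝ} {j : Fin N} (h : ¬ b j ≤ t) :
    X.pushTo b x t j = 0 := dif_neg h

lemma trans_pushTo {s t : ℝ} {j : Fin N} (hjs : b j ≤ s) (hst : s ≤ t) :
    X.trans s t hst (X.pushTo b x s j) = X.pushTo b x t j := by
  rw [pushTo_of_le hjs, pushTo_of_le (hjs.trans hst), X.trans_trans]

lemma vanish (hX : X.IsBasisFamily b d x) (i : Fin N) {s : ℝ} (hbi : b i < d i)
    (hs : d i < s) (hbs : b i ≤ s) :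
    X.trans (b i) s hbs (x i) = 0 := by
  classical
  set S : Set ℝ := {s : ℝ | ∃ h : b i < s, X.trans (b i) s h.le (x i) = 0} with hSdef
  have hdeath : sInf S = d i := hX.2.1 i
  set T : ℝ := 1 + |b i| + ∑ k, |d k| with hT
  have hsum : ∀ k, d k ≤ ∑ k, |d k| := fun k =>
    (le_abs_self _).trans (Finset.single_le_sum (fun k _ => abs_nonneg (d k)) (Finset.mem_univ k))
  have hTd : ∀ k, d k < T := by
    intro k; have h1 := hsum k; have h2 := abs_nonneg (b i); simp only [hT]; linarith
  have hTb : b i < T := by have := hTd i; linarith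
  have hempty : IsEmpty {k : Fin N // b k ≤ T ∧ T < d k} := by
    constructor; rintro ⟨k, hk1, hk2⟩; exact absurd hk2 (not_lt.mpr (hTd k).le)
  have hzero : X.trans (b i) T hTb.le (x i) = 0 := by
    have hmem : X.trans (b i) T hTb.le (x i) ∈
        Submodule.span K (Set.range fun k : {k : Fin N // b k ≤ T ∧ T < d k} =>
          X.trans (b k.1) T k.2.1 (x k.1)) := (hX.2.2 T).2 ▸ Submodule.mem_top
    rwa [Set.range_eq_empty, Submodule.span_empty, Submodule.mem_bot] at hmem
  have hne : S.Nonempty := ⟨T, hTb, hzero⟩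
  have hbdd : BddBelow S := ⟨b i, fun r hr => by obtain ⟨h, -⟩ := hr; exact h.le⟩
  have hlt : sInf S < s := by rw [hdeath]; exact hs
  obtain ⟨s0, hs0S, hs0⟩ := exists_lt_of_csInf_lt hne hlt
  obtain ⟨hbs0, h0⟩ := hs0S
  have h2 := X.trans_trans (b i) s0 s hbs0.le hs0.le (x i)
  rw [h0, map_zero] at h2
  exact h2.symm

lemma sum_push (t : ℝ) (c : Fin N → K)
    (hc : ∀ k, ¬(b k ≤ t ∧ t < d k) → c k = 0) :
    ∑ k, c k • X.pushTo b x t k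
      = ∑ k : {k : Fin N // b k ≤ t ∧ t < d k}, c k.1 • X.trans (b k.1) t k.2.1 (x k.1) := by
  classical
  have h1 : ∑ k, c k • X.pushTo b x t k
      = ∑ k ∈ Finset.univ.filter (fun k => b k ≤ t ∧ t < d k), c k • X.pushTo b x t k := by
    refine (Finset.sum_filter_of_ne ?_).symm
    intro k _ hk
    by_contra h
    exact hk (by rw [hc k h, zero_smul])
  rw [h1, Finset.sum_subtype (p := fun k => b k ≤ t ∧ t < d k) _ (by simp) (fun k => c k • X.pushTo b x t k)]
  exact Finset.sum_congr rfl fun k _ => by rw [pushTo_of_le k.2.1]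

lemma indep (hX : X.IsBasisFamily b d x) (t : ℝ) (c : Fin N → K)
    (hc : ∀ k, ¬(b k ≤ t ∧ t < d k) → c k = 0)
    (hsum : ∑ k, c k • X.pushTo b x t k = 0) : ∀ k, c k = 0 := by
  classical
  rw [sum_push t c hc] at hsum
  have h := Fintype.linearIndependent_iff.mp (hX.2.2 t).1 (fun k => c k.1) hsum
  intro k
  by_cases hk : b k ≤ t ∧ t < d k
  · exact h ⟨k, hk⟩
  · exact hc k hk

lemma expand (hX : X.IsBasisFamily b d x) (t : ℝ) (v : X.space t) :
    ∃ c : Fin N → K, (∀ k, ¬(b k ≤ t ∧ t < d k) → c k = 0) ∧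
      v = ∑ k, c k • X.pushTo b x t k := by
  classical
  let Bas : Module.Basis {k : Fin N // b k ≤ t ∧ t < d k} K (X.space t) :=
    Module.Basis.mk (hX.2.2 t).1 (le_of_eq (hX.2.2 t).2.symm)
  refine ⟨fun k => if h : b k ≤ t ∧ t < d k then Bas.repr v ⟨k, h⟩ else 0, fun k hk => dif_neg hk, ?_⟩
  rw [sum_push t _ (fun k hk => dif_neg hk)]
  conv_lhs => rw [← Bas.sum_repr v]
  refine Finset.sum_congr rfl fun k _ => ?_
  rw [dif_pos k.2]
  congr 1
  simp [Bas, Module.Basis.coe_mk]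

end PersistenceModule
theorem statement6 {K : Type u} [Field K] {N : ℕ}
    (X Y : PersistenceModule K) (ε : ℝ) (hε : 0 ≤ ε)
    (bX dX bY dY : Fin N → ℝ)
    (x : ∀ i, X.space (bX i)) (y : ∀ i, Y.space (bY i))
    (hbdX : ∀ i, bX i < dX i) (hbdY : ∀ i, bY i < dY i)
    (hdistX : Function.Injective fun i => (bX i, dX i))
    (hdistY : Function.Injective fun i => (bY i, dY i))
    (hX : X.IsBasisFamily bX dX x) (hY : Y.IsBasisFamily bY dY y)
    (hgapX : ∀ p q : Fin N ⊕ Fin N, p ≠ q →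
        2 * ε < |Sum.elim bX dX p - Sum.elim bX dX q|)
    (hgapY : ∀ p q : Fin N ⊕ Fin N, p ≠ q →
        2 * ε < |Sum.elim bY dY p - Sum.elim bY dY q|)
    (F : EpsMorphism X Y ε) (G : EpsMorphism Y X ε)
    (hFG : IsInterleaving X Y ε F G)
    (hb : ∀ i, |bX i - bY i| < ε) (hd : ∀ i, |dX i - dY i| < ε)
    (A : Matrix (Fin N) (Fin N) K)
    (hA : IsMatrixOf F bX dX x bY dY y A) :
    IsBasisTransformMatrix bY dY A ∧
    IsMatrixOf F bX dX x bY dY (transformBasis Y bY y A)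
      (1 : Matrix (Fin N) (Fin N) K) ∧
    IsMatrixOf G bY dY (transformBasis Y bY y A) bX dX x
      (1 : Matrix (Fin N) (Fin N) K) := by
  classical
  have hb2 : ∀ i, -ε < bX i - bY i ∧ bX i - bY i < ε := fun i => abs_lt.mp (hb i)
  have hd2 : ∀ i, -ε < dX i - dY i ∧ dX i - dY i < ε := fun i => abs_lt.mp (hd i)
  have hgapX' : ∀ i, 2*ε < dX i - bX i := by
    intro i
    have h := hgapX (Sum.inl i) (Sum.inr i) (by simp)
    simp only [Sum.elim_inl, Sum.elim_inr] at h
    rw [abs_of_nonpos (by linarith [hbdX i])] at h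
    linarith
  have hgapY' : ∀ i, 2*ε < dY i - bY i := by
    intro i
    have h := hgapY (Sum.inl i) (Sum.inr i) (by simp)
    simp only [Sum.elim_inl, Sum.elim_inr] at h
    rw [abs_of_nonpos (by linarith [hbdY i])] at h
    linarith
  have hvpX : ∀ (k : Fin N) (t : ℝ), dX k < t → X.pushTo bX x t k = 0 := by
    intro k t hkt
    by_cases hbk : bX k ≤ t
    · rw [PersistenceModule.pushTo_of_le hbk]
      exact PersistenceModule.vanish hX k (hbdX k) hkt hbk
    · exact PersistenceModule.pushTo_of_not_le hbk
  have hvpY : ∀ (k : Fin N) (t : ℝ), dY k < t → Y.pushTo bY y t k = 0 := by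
    intro k t hkt
    by_cases hbk : bY k ≤ t
    · rw [PersistenceModule.pushTo_of_le hbk]
      exact PersistenceModule.vanish hY k (hbdY k) hkt hbk
    · exact PersistenceModule.pushTo_of_not_le hbk
  have hAsupp : ∀ j i, A j i ≠ 0 → bY j ≤ bX i + ε ∧ bX i + ε < dY j := by
    intro j i h
    by_contra hcon
    exact h (hA.2 j i hcon)
  have hbirthlt : ∀ j i, A j i ≠ 0 → j ≠ i → bY j < bY i - 2*ε := by
    intro j i hji hne
    have h1 := (hAsupp j i hji).1
    have h2 := hb2 i
    have h3 := hgapY (Sum.inl j) (Sum.inl i) (fun h => hne (Sum.inl_injective h))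
    simp only [Sum.elim_inl] at h3
    rcases lt_abs.mp h3 with h | h
    · linarith [h2.1, h2.2]
    · linarith [h2.1, h2.2]
  have hbirthle : ∀ j i, A j i ≠ 0 → bY j ≤ bY i := by
    intro j i hji
    by_cases hne : j = i
    · exact le_of_eq (by rw [hne])
    · linarith [hbirthlt j i hji hne]
  have hdeathle : ∀ j i, A j i ≠ 0 → dY j ≤ dY i := by
    intro j0 i hj0
    by_contra hcon
    push_neg at hcon
    have hne : j0 ≠ i := fun h => by rw [h] at hcon; exact lt_irrefl _ hcon
    have h3 := hgapY (Sum.inr j0) (Sum.inr i) (fun h => hne (Sum.inr_injective h))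
    simp only [Sum.elim_inr] at h3
    have hsep : 2*ε < dY j0 - dY i := by
      rcases lt_abs.mp h3 with h | h
      · exact h
      · linarith
    have hlt : dX i + ε < dY j0 := by linarith [(hd2 i).1, (hd2 i).2]
    obtain ⟨t, htmem, htd⟩ := ((Set.Ioo_infinite hlt).diff (Set.finite_range dY)).nonempty
    obtain ⟨ht1, ht2⟩ := htmem
    have htne : ∀ j, ¬ dY j = t := fun j h => htd ⟨j, h⟩
    have hbXle : bX i + ε ≤ t := by linarith [hbdX i]
    have hL : Y.trans (bX i + ε) t hbXle (F.maps (bX i) (bX i + ε) rfl (x i)) = 0 := by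
      have hst : bX i ≤ t - ε := by linarith [hbdX i]
      have hcomm := F.comm (bX i) (t - ε) (bX i + ε) t rfl (by ring) hst (x i)
      have hz : X.trans (bX i) (t - ε) hst (x i) = 0 :=
        PersistenceModule.vanish hX i (hbdX i) (by linarith) hst
      rw [hz, map_zero] at hcomm
      exact hcomm.symm
    have heq2 : ∑ j, Y.trans (bX i + ε) t hbXle (A j i • Y.pushTo bY y (bX i + ε) j) = 0 := by
      rw [← map_sum, ← hA.1 i]
      exact hL
    set cc : Fin N → K := fun j => if bY j ≤ t ∧ t < dY j then A j i else 0 with hcc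
    have hsum0 : ∑ j, cc j • Y.pushTo bY y t j = 0 := by
      rw [← heq2]
      refine Finset.sum_congr rfl fun j _ => ?_
      rw [map_smul]
      by_cases hj : A j i = 0
      · rw [hj]; simp [hcc, hj]
      · have hjb := (hAsupp j i hj).1
        rw [PersistenceModule.trans_pushTo hjb hbXle]
        by_cases hal : bY j ≤ t ∧ t < dY j
        · simp [hcc, hal]
        · have hbj : bY j ≤ t := hjb.trans hbXle
          have hdj : dY j < t := by
            rcases not_and_or.mp hal with h | h
            · exact absurd hbj h
            · exact lt_of_le_of_ne (not_lt.mp h) (htne j)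
          rw [hvpY j t hdj]
          simp [hcc, hal]
    have hall := PersistenceModule.indep hY t cc (fun k hk => by simp [hcc, hk]) hsum0
    have hj0alive : bY j0 ≤ t ∧ t < dY j0 := ⟨(hAsupp j0 i hj0).1.trans hbXle, ht2⟩
    have hz0 := hall j0
    rw [hcc] at hz0
    simp only [hj0alive, and_self, if_true] at hz0
    exact hj0 hz0
  have hgex : ∀ j : Fin N, ∃ cj : Fin N → K,
      (∀ k, ¬(bX k ≤ bY j + ε ∧ bY j + ε < dX k) → cj k = 0) ∧
      G.maps (bY j) (bY j + ε) rfl (y j) = ∑ k, cj k • X.pushTo bX x (bY j + ε) k :=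
    fun j => PersistenceModule.expand hX (bY j + ε) _
  choose c hc0 hcg using hgex
  have hGpush : ∀ (j : Fin N) (v u : ℝ) (hjv : bY j ≤ v) (hvu : v + ε = u),
      G.maps v u hvu (Y.pushTo bY y v j) = ∑ k, c j k • X.pushTo bX x u k := by
    intro j v u hjv hvu
    have hju : bY j + ε ≤ u := by linarith
    rw [PersistenceModule.pushTo_of_le hjv]
    have hcomm := G.comm (bY j) v (bY j + ε) u rfl hvu hjv (y j)
    rw [hcomm, hcg j, map_sum]
    refine Finset.sum_congr rfl fun k _ => ?_
    rw [map_smul]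
    by_cases hk : bX k ≤ bY j + ε ∧ bY j + ε < dX k
    · rw [PersistenceModule.trans_pushTo hk.1 hju]
    · rw [hc0 j k hk, zero_smul, zero_smul]
  have hmain : ∀ i : Fin N, (∑ j, A j i * c j i) = 1 ∧
      ∀ k, k ≠ i → (∑ j, A j i * c j k) • X.pushTo bX x (bY i + ε) k = 0 := by
    intro i
    have ht2i : bX i + ε + ε = bX i + 2*ε := by ring
    have hr : bX i ≤ bX i + 2*ε := by linarith
    have hinter := hFG.1 (bX i) (bX i + 2*ε) ht2i hr (x i)
    have hstep : ∀ j : Fin N, G.maps (bX i + ε) (bX i + 2*ε) ht2i (A j i • Y.pushTo bY y (bX i + ε) j)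
        = ∑ k, (A j i * c j k) • X.pushTo bX x (bX i + 2*ε) k := by
      intro j
      rw [map_smul]
      by_cases hj : A j i = 0
      · simp [hj]
      · rw [hGpush j (bX i + ε) (bX i + 2*ε) (hAsupp j i hj).1 ht2i, Finset.smul_sum]
        exact Finset.sum_congr rfl fun k _ => smul_smul _ _ _
    have hGF : G.maps (bX i + ε) (bX i + 2*ε) ht2i (F.maps (bX i) (bX i + ε) rfl (x i))
        = ∑ k, (∑ j, A j i * c j k) • X.pushTo bX x (bX i + 2*ε) k := by
      rw [hA.1 i, map_sum]
      calc ∑ j, G.maps (bX i + ε) (bX i + 2*ε) ht2i (A j i • Y.pushTo bY y (bX i + ε) j)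
          = ∑ j, ∑ k, (A j i * c j k) • X.pushTo bX x (bX i + 2*ε) k :=
            Finset.sum_congr rfl fun j _ => hstep j
        _ = ∑ k, ∑ j, (A j i * c j k) • X.pushTo bX x (bX i + 2*ε) k := Finset.sum_comm
        _ = ∑ k, (∑ j, A j i * c j k) • X.pushTo bX x (bX i + 2*ε) k :=
            Finset.sum_congr rfl fun k _ => (Finset.sum_smul).symm
    have hEq : X.pushTo bX x (bX i + 2*ε) i
        = ∑ k, (∑ j, A j i * c j k) • X.pushTo bX x (bX i + 2*ε) k := by
      rw [PersistenceModule.pushTo_of_le hr, ← hinter]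
      exact hGF
    set E : Fin N → K := fun k => if bX k ≤ bX i + 2*ε ∧ bX i + 2*ε < dX k
        then ((∑ j, A j i * c j k) - if k = i then 1 else 0) else 0 with hE
    have hpushz : ∀ k, ¬(bX k ≤ bX i + 2*ε ∧ bX i + 2*ε < dX k) →
        X.pushTo bX x (bX i + 2*ε) k = 0 := by
      intro k hk
      rcases not_and_or.mp hk with h | h
      · exact PersistenceModule.pushTo_of_not_le h
      · have hsep := hgapX (Sum.inl i) (Sum.inr k) (by simp)
        simp only [Sum.elim_inl, Sum.elim_inr] at hsep
        have hle : dX k ≤ bX i + 2*ε := not_lt.mp h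
        have hlt2 : dX k < bX i + 2*ε := by
          rcases lt_abs.mp hsep with h' | h'
          · linarith
          · linarith
        exact hvpX k _ hlt2
    have hEsum : ∑ k, E k • X.pushTo bX x (bX i + 2*ε) k = 0 := by
      have h1 : ∑ k, E k • X.pushTo bX x (bX i + 2*ε) k
          = ∑ k, ((∑ j, A j i * c j k) - if k = i then 1 else 0) • X.pushTo bX x (bX i + 2*ε) k := by
        refine Finset.sum_congr rfl fun k _ => ?_
        by_cases hk : bX k ≤ bX i + 2*ε ∧ bX i + 2*ε < dX k
        · simp [hE, hk]
        · rw [hpushz k hk]; simp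
      rw [h1]
      have h2 : ∑ k, ((∑ j, A j i * c j k) - if k = i then 1 else 0) • X.pushTo bX x (bX i + 2*ε) k
          = (∑ k, (∑ j, A j i * c j k) • X.pushTo bX x (bX i + 2*ε) k)
            - ∑ k, (if k = i then (1:K) else 0) • X.pushTo bX x (bX i + 2*ε) k := by
        rw [← Finset.sum_sub_distrib]
        exact Finset.sum_congr rfl fun k _ => sub_smul _ _ _
      rw [h2, ← hEq]
      have h3 : ∑ k, (if k = i then (1:K) else 0) • X.pushTo bX x (bX i + 2*ε) k
          = X.pushTo bX x (bX i + 2*ε) i := by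
        simp [ite_smul]
      rw [h3, sub_self]
    have hE0 := PersistenceModule.indep hX (bX i + 2*ε) E (fun k hk => by simp [hE, hk]) hEsum
    have halivei : bX i ≤ bX i + 2*ε ∧ bX i + 2*ε < dX i := ⟨by linarith, by linarith [hgapX' i]⟩
    have hCCi : (∑ j, A j i * c j i) = 1 := by
      have h4 := hE0 i
      rw [hE] at h4
      simp only [halivei, and_self, if_true, if_pos rfl] at h4
      exact sub_eq_zero.mp h4
    refine ⟨hCCi, ?_⟩
    intro k hki
    by_cases hal : bX k ≤ bX i + 2*ε ∧ bX i + 2*ε < dX k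
    · have h4 := hE0 k
      rw [hE] at h4
      simp only [hal, and_self, if_true, hki, if_false, sub_zero] at h4
      rw [h4, zero_smul]
    · have hz : X.pushTo bX x (bY i + ε) k = 0 := by
        rcases not_and_or.mp hal with h | h
        · refine PersistenceModule.pushTo_of_not_le (fun hcon => h ?_)
          have h2 := hb2 i
          linarith [h2.1, h2.2]
        · have hsep := hgapX (Sum.inl i) (Sum.inr k) (by simp)
          simp only [Sum.elim_inl, Sum.elim_inr] at hsep
          have hle : dX k ≤ bX i + 2*ε := not_lt.mp h
          have h2 := hb2 i
          have hlt3 : dX k < bY i + ε := by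
            rcases lt_abs.mp hsep with h' | h'
            · linarith [h2.1, h2.2]
            · linarith
          exact hvpX k _ hlt3
      rw [hz, smul_zero]
  refine ⟨⟨?_, ?_⟩, ⟨?_, ?_⟩, ⟨?_, ?_⟩⟩
  · -- diagonal nonzero
    intro i
    have h1 := (hmain i).1
    have h2 : ∑ j, A j i * c j i = A i i * c i i := by
      refine Finset.sum_eq_single i (fun j _ hji => ?_) (fun h => absurd (Finset.mem_univ i) h)
      by_cases hj : A j i = 0
      · rw [hj, zero_mul]
      · have hlt := hbirthlt j i hj hji
        have h2b := hb2 i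
        have hcz : c j i = 0 := by
          refine hc0 j i (fun hcon => ?_)
          have h5 := hcon.1
          linarith [h2b.1]
        rw [hcz, mul_zero]
    rw [h2] at h1
    intro hAii
    rw [hAii, zero_mul] at h1
    exact zero_ne_one h1
  · exact fun j i h => ⟨hbirthle j i h, hdeathle j i h⟩
  · -- Mat(F) new basis = 1, clause 1
    intro i
    have h2b := hb2 i
    have hle1 : bY i ≤ bX i + ε := by linarith [h2b.1]
    have hsingle : ∑ j, (1 : Matrix (Fin N) (Fin N) K) j i
          • Y.pushTo bY (transformBasis Y bY y A) (bX i + ε) j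
        = Y.pushTo bY (transformBasis Y bY y A) (bX i + ε) i := by
      rw [Finset.sum_eq_single i (fun j _ hji => by rw [Matrix.one_apply_ne hji, zero_smul])
        (fun h => absurd (Finset.mem_univ i) h), Matrix.one_apply_eq, one_smul]
    rw [hsingle, PersistenceModule.pushTo_of_le hle1, hA.1 i]
    show ∑ j, A j i • Y.pushTo bY y (bX i + ε) j
        = Y.trans (bY i) (bX i + ε) hle1 (∑ j, A j i • Y.pushTo bY y (bY i) j)
    rw [map_sum]
    refine Finset.sum_congr rfl fun j _ => ?_
    rw [map_smul]
    by_cases hj : A j i = 0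
    · rw [hj, zero_smul, zero_smul]
    · rw [PersistenceModule.trans_pushTo (hbirthle j i hj) hle1]
  · -- Mat(F) new basis = 1, clause 2
    intro j i hcon
    by_cases hji : j = i
    · subst hji
      exfalso
      apply hcon
      have h2b := hb2 j
      have h2d := hd2 j
      constructor
      · linarith [h2b.1]
      · linarith [hgapX' j, h2d.1]
    · exact Matrix.one_apply_ne hji
  · -- Mat(G) = 1, clause 1
    intro i
    have hsingle : ∑ j, (1 : Matrix (Fin N) (Fin N) K) j i • X.pushTo bX x (bY i + ε) j
        = X.pushTo bX x (bY i + ε) i := by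
      rw [Finset.sum_eq_single i (fun j _ hji => by rw [Matrix.one_apply_ne hji, zero_smul])
        (fun h => absurd (Finset.mem_univ i) h), Matrix.one_apply_eq, one_smul]
    rw [hsingle]
    have hunf : G.maps (bY i) (bY i + ε) rfl (transformBasis Y bY y A i)
        = ∑ j, A j i • G.maps (bY i) (bY i + ε) rfl (Y.pushTo bY y (bY i) j) := by
      show G.maps (bY i) (bY i + ε) rfl (∑ j, A j i • Y.pushTo bY y (bY i) j) = _
      rw [map_sum]
      exact Finset.sum_congr rfl fun j _ => map_smul _ _ _
    rw [hunf]
    have hterm : ∀ j, A j i • G.maps (bY i) (bY i + ε) rfl (Y.pushTo bY y (bY i) j)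
        = ∑ k, (A j i * c j k) • X.pushTo bX x (bY i + ε) k := by
      intro j
      by_cases hj : A j i = 0
      · simp [hj]
      · rw [hGpush j (bY i) (bY i + ε) (hbirthle j i hj) rfl, Finset.smul_sum]
        exact Finset.sum_congr rfl fun k _ => smul_smul _ _ _
    calc ∑ j, A j i • G.maps (bY i) (bY i + ε) rfl (Y.pushTo bY y (bY i) j)
        = ∑ j, ∑ k, (A j i * c j k) • X.pushTo bX x (bY i + ε) k :=
          Finset.sum_congr rfl fun j _ => hterm j
      _ = ∑ k, ∑ j, (A j i * c j k) • X.pushTo bX x (bY i + ε) k := Finset.sum_comm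
      _ = ∑ k, (∑ j, A j i * c j k) • X.pushTo bX x (bY i + ε) k :=
          Finset.sum_congr rfl fun k _ => (Finset.sum_smul).symm
      _ = X.pushTo bX x (bY i + ε) i := by
          rw [Finset.sum_eq_single i (fun k _ hki => (hmain i).2 k hki)
            (fun h => absurd (Finset.mem_univ i) h), (hmain i).1, one_smul]
  · -- Mat(G) = 1, clause 2
    intro j i hcon
    by_cases hji : j = i
    · subst hji
      exfalso
      apply hcon
      have h2b := hb2 j
      refine ⟨by linarith [h2b.2], ?_⟩
      linarith [hgapX' j, h2b.1]
    · exact Matrix.one_apply_ne hji
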